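/- For every a > 1, the value of the Fourier transform of K_a at 0 satisfies the two-sided estimate (7/8)·e^{−a}·√(2π/a) < K̂_a(0) < e^{−a}·√(2π/a), where K̂_a(0) = ∫_{−∞}^{+∞} exp(−a·cosh x) dx. -/

import Mathlib

open Real MeasureTheory Filter Set Topology

lemma integrable_sq_mul_exp {b : ℝ} (hb : 0 < b) :
    Integrable (fun x : ℝ => x ^ 2 * Real.exp (-b * x ^ 2)) := by
  have := integrable_rpow_mul_exp_neg_mul_sq hb (s := 2) (by norm_num)
  simpa [Real.rpow_natCast] using this

lemma gaussian_second_moment {b : ℝ} (hb : 0 < b) :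
    ∫ x : ℝ, x ^ 2 * Real.exp (-b * x ^ 2) = Real.sqrt (π / b) / (2 * b) := by
  set F : ℝ → ℝ := fun x => -(x * Real.exp (-b * x ^ 2)) / (2 * b) with hF
  set G : ℝ → ℝ := fun x => x ^ 2 * Real.exp (-b * x ^ 2) - Real.exp (-b * x ^ 2) / (2 * b)
    with hGdef
  have hderiv : ∀ x : ℝ, HasDerivAt F (G x) x := by
    intro x
    have h1 : HasDerivAt (fun x : ℝ => Real.exp (-b * x ^ 2))
        (Real.exp (-b * x ^ 2) * (-b * (2 * x))) x := by
      have : HasDerivAt (fun x : ℝ => -b * x ^ 2) (-b * (2 * x)) x := by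
        simpa using ((hasDerivAt_pow 2 x).const_mul (-b))
      exact this.exp
    have h2 : HasDerivAt (fun x : ℝ => x * Real.exp (-b * x ^ 2))
        (1 * Real.exp (-b * x ^ 2) + x * (Real.exp (-b * x ^ 2) * (-b * (2 * x)))) x :=
      (hasDerivAt_id x).mul h1
    have h3 := (h2.neg).div_const (2 * b)
    refine h3.congr_deriv ?_
    simp only [hGdef]
    field_simp
    ring
  have hGint : Integrable G := by
    exact (integrable_sq_mul_exp hb).sub ((integrable_exp_neg_mul_sq hb).div_const (2 * b))
  have htend0 : Tendsto F (cocompact ℝ) (𝓝 0) := by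
    have h := tendsto_rpow_abs_mul_exp_neg_mul_sq_cocompact hb 1
    have habs : Tendsto (fun x : ℝ => |x * Real.exp (-b * x ^ 2)|) (cocompact ℝ) (𝓝 0) := by
      have : (fun x : ℝ => |x * Real.exp (-b * x ^ 2)|)
          = fun x : ℝ => |x| ^ (1 : ℝ) * Real.exp (-b * x ^ 2) := by
        funext x
        rw [abs_mul, abs_of_pos (Real.exp_pos _), Real.rpow_one]
      rw [this]; exact h
    have := (tendsto_zero_iff_abs_tendsto_zero _).2 habs
    have := this.div_const (2 * b)
    simpa [hF, neg_div] using this.neg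
  have htop : Tendsto F atTop (𝓝 0) := htend0.mono_left (_root_.atTop_le_cocompact)
  have hbot : Tendsto F atBot (𝓝 0) := htend0.mono_left (_root_.atBot_le_cocompact)
  have hIoi : ∫ x in Ioi (0 : ℝ), G x = 0 - F 0 :=
    integral_Ioi_of_hasDerivAt_of_tendsto (hderiv 0).continuousAt.continuousWithinAt
      (fun x _ => hderiv x) hGint.integrableOn htop
  have hIic : ∫ x in Iic (0 : ℝ), G x = F 0 - 0 :=
    integral_Iic_of_hasDerivAt_of_tendsto (hderiv 0).continuousAt.continuousWithinAt
      (fun x _ => hderiv x) hGint.integrableOn hbot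
  have hG0 : ∫ x : ℝ, G x = 0 := by
    rw [← intervalIntegral.integral_Iic_add_Ioi hGint.integrableOn hGint.integrableOn, hIoi, hIic]
    ring
  have hsplit : ∫ x : ℝ, G x
      = (∫ x : ℝ, x ^ 2 * Real.exp (-b * x ^ 2)) - ∫ x : ℝ, Real.exp (-b * x ^ 2) / (2 * b) :=
    integral_sub (integrable_sq_mul_exp hb) ((integrable_exp_neg_mul_sq hb).div_const (2 * b))
  have hgauss : ∫ x : ℝ, Real.exp (-b * x ^ 2) / (2 * b) = Real.sqrt (π / b) / (2 * b) := by
    rw [integral_div, integral_gaussian]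
  rw [hsplit, hgauss] at hG0
  linarith

lemma cosh_subst (a : ℝ) :
    ∫ x : ℝ, Real.exp (-a * Real.cosh x)
      = ∫ u : ℝ, (Real.sqrt (1 + (u / 2) ^ 2))⁻¹ * Real.exp (-a * (1 + u ^ 2 / 2)) := by
  set f : ℝ → ℝ := fun u => 2 * Real.arsinh (u / 2) with hf
  set f' : ℝ → ℝ := fun u => (Real.sqrt (1 + (u / 2) ^ 2))⁻¹ with hf'
  have hderiv : ∀ u : ℝ, HasDerivAt f (f' u) u := by
    intro u
    have h1 : HasDerivAt (fun u : ℝ => u / 2) (1 / 2) u := by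
      simpa using (hasDerivAt_id u).div_const 2
    have h2 := ((Real.hasStrictDerivAt_arsinh (u / 2)).hasDerivAt.comp u h1).const_mul 2
    refine h2.congr_deriv ?_
    rw [hf']
    have hs : Real.sqrt (1 + (u / 2) ^ 2) ≠ 0 := by
      positivity
    field_simp
  have hinj : Function.Injective f := by
    intro u v h
    have := mul_left_cancel₀ (two_ne_zero) h
    have := Real.arsinh_injective this
    linarith [this]
  have hsurj : Function.Surjective f := by
    intro y
    exact ⟨2 * Real.sinh (y / 2), by
      simp only [hf]
      rw [mul_div_cancel_left₀ _ (two_ne_zero), Real.arsinh_sinh, mul_div_cancel₀]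
      exact two_ne_zero⟩
  have himg : f '' Set.univ = Set.univ := by
    rw [Set.image_univ, Set.range_eq_univ.2 hsurj]
  have key := integral_image_eq_integral_abs_deriv_smul (s := Set.univ) MeasurableSet.univ
      (fun x _ => (hderiv x).hasDerivWithinAt) (hinj.injOn)
      (fun x => Real.exp (-a * Real.cosh x))
  rw [himg] at key
  simp only [Measure.restrict_univ, setIntegral_univ] at key
  rw [key]
  congr 1
  funext u
  have hcosh : Real.cosh (f u) = 1 + u ^ 2 / 2 := by
    show Real.cosh (2 * Real.arsinh (u / 2)) = 1 + u ^ 2 / 2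
    rw [Real.cosh_two_mul, Real.cosh_sq, Real.sinh_arsinh]
    ring
  have habs : |f' u| = (Real.sqrt (1 + (u / 2) ^ 2))⁻¹ := by
    rw [hf']
    exact abs_of_nonneg (by positivity)
  rw [hcosh, smul_eq_mul, habs]

theorem Khat_zero_bounds (a : ℝ) (ha : 1 < a) :
    (7 / 8) * Real.exp (-a) * Real.sqrt (2 * π / a) <
        (∫ x : ℝ, Real.exp (-a * Real.cosh x)) ∧
      (∫ x : ℝ, Real.exp (-a * Real.cosh x)) < Real.exp (-a) * Real.sqrt (2 * π / a) := by
  have ha0 : (0 : ℝ) < a := lt_trans one_pos ha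
  have hb : (0 : ℝ) < a / 2 := by linarith
  set G : ℝ := Real.sqrt (π / (a / 2)) with hG
  have hGpos : 0 < G := Real.sqrt_pos.2 (by positivity)
  have hGeq : Real.sqrt (2 * π / a) = G := by
    rw [hG]; congr 1; field_simp
  -- the factor
  set c : ℝ → ℝ := fun u => (Real.sqrt (1 + (u / 2) ^ 2))⁻¹ with hc
  have hcpos : ∀ u, 0 < c u := fun u => inv_pos.2 (Real.sqrt_pos.2 (by positivity))
  have hcle : ∀ u, c u ≤ 1 := by
    intro u
    rw [hc]
    apply inv_le_one_of_one_le₀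
    rw [show (1 : ℝ) = Real.sqrt 1 by simp]
    exact Real.sqrt_le_sqrt (by nlinarith [sq_nonneg (u / 2), Real.sqrt_one])
  have hcge : ∀ u, 1 - u ^ 2 / 8 ≤ c u := by
    intro u
    have hspos : 0 < Real.sqrt (1 + (u / 2) ^ 2) := Real.sqrt_pos.2 (by positivity)
    have hsle : Real.sqrt (1 + (u / 2) ^ 2) ≤ 1 + u ^ 2 / 8 := by
      rw [show (1 : ℝ) + u ^ 2 / 8 = Real.sqrt ((1 + u ^ 2 / 8) ^ 2) from
        (Real.sqrt_sq (by positivity)).symm]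
      exact Real.sqrt_le_sqrt (by nlinarith [sq_nonneg u, sq_nonneg (u * u)])
    have h2 : (Real.sqrt (1 + (u / 2) ^ 2))⁻¹ ≥ (1 + u ^ 2 / 8)⁻¹ :=
      inv_anti₀ hspos hsle
    have h3 : 1 - u ^ 2 / 8 ≤ (1 + u ^ 2 / 8)⁻¹ := by
      rw [← one_div, le_div_iff₀ (by positivity : (0:ℝ) < 1 + u ^ 2 / 8)]
      nlinarith [sq_nonneg u, sq_nonneg (u * u)]
    exact le_trans h3 h2
  have hccont : Continuous c := by
    apply Continuous.inv₀
    · exact (continuous_const.add ((continuous_id.div_const 2).pow 2)).sqrt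
    · intro u; positivity
  -- integrability
  have hgint : Integrable (fun u : ℝ => Real.exp (-(a / 2) * u ^ 2)) :=
    integrable_exp_neg_mul_sq hb
  have hJint : Integrable (fun u : ℝ => c u * Real.exp (-(a / 2) * u ^ 2)) := by
    apply hgint.mono' ((hccont.mul (by continuity)).aestronglyMeasurable)
    filter_upwards with u
    simp only [Pi.mul_apply]
    rw [norm_mul, Real.norm_eq_abs, Real.norm_eq_abs, abs_of_pos (hcpos u),
      abs_of_pos (Real.exp_pos _)]
    exact mul_le_of_le_one_left (Real.exp_pos _).le (hcle u)
  set J : ℝ := ∫ u : ℝ, c u * Real.exp (-(a / 2) * u ^ 2) with hJ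
  -- rewrite the main integral
  have hIeq : (∫ x : ℝ, Real.exp (-a * Real.cosh x)) = Real.exp (-a) * J := by
    rw [cosh_subst a, hJ, ← integral_const_mul]
    congr 1
    funext u
    show (Real.sqrt (1 + (u / 2) ^ 2))⁻¹ * Real.exp (-a * (1 + u ^ 2 / 2))
        = Real.exp (-a) * ((Real.sqrt (1 + (u / 2) ^ 2))⁻¹ * Real.exp (-(a / 2) * u ^ 2))
    rw [show -a * (1 + u ^ 2 / 2) = -a + -(a / 2) * u ^ 2 by ring, Real.exp_add]
    ring
  -- Gaussian values
  have hgauss : (∫ u : ℝ, Real.exp (-(a / 2) * u ^ 2)) = G := integral_gaussian (a / 2)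
  have hmom : (∫ u : ℝ, u ^ 2 * Real.exp (-(a / 2) * u ^ 2)) = G / a := by
    rw [gaussian_second_moment hb, hG]
    congr 1
    ring
  -- lower bound for J
  have hlowint : Integrable (fun u : ℝ => Real.exp (-(a / 2) * u ^ 2)
      - u ^ 2 * Real.exp (-(a / 2) * u ^ 2) / 8) :=
    hgint.sub ((integrable_sq_mul_exp hb).div_const 8)
  have hlow : G * (1 - 1 / (8 * a)) ≤ J := by
    have h1 : (∫ u : ℝ, (Real.exp (-(a / 2) * u ^ 2)
        - u ^ 2 * Real.exp (-(a / 2) * u ^ 2) / 8)) ≤ J := by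
      apply integral_mono hlowint hJint
      intro u
      have := mul_le_mul_of_nonneg_right (hcge u) (Real.exp_pos (-(a / 2) * u ^ 2)).le
      calc Real.exp (-(a / 2) * u ^ 2) - u ^ 2 * Real.exp (-(a / 2) * u ^ 2) / 8
          = (1 - u ^ 2 / 8) * Real.exp (-(a / 2) * u ^ 2) := by ring
        _ ≤ c u * Real.exp (-(a / 2) * u ^ 2) := this
    rw [integral_sub hgint ((integrable_sq_mul_exp hb).div_const 8), integral_div,
      hgauss, hmom] at h1
    calc G * (1 - 1 / (8 * a)) = G - G / a / 8 := by ring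
      _ ≤ J := h1
  -- upper bound for J
  have hDnonneg : ∀ u : ℝ, 0 ≤ (1 - c u) * Real.exp (-(a / 2) * u ^ 2) := fun u =>
    mul_nonneg (by linarith [hcle u]) (Real.exp_pos _).le
  have hDint : Integrable (fun u : ℝ => (1 - c u) * Real.exp (-(a / 2) * u ^ 2)) := by
    have h2 := hgint.sub hJint
    have heq : (fun u : ℝ => (1 - c u) * Real.exp (-(a / 2) * u ^ 2))
        = (fun u : ℝ => Real.exp (-(a / 2) * u ^ 2))
          - (fun u : ℝ => c u * Real.exp (-(a / 2) * u ^ 2)) := by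
      funext u; simp only [Pi.sub_apply]; ring
    rw [heq]; exact h2
  have hDpos : 0 < ∫ u : ℝ, (1 - c u) * Real.exp (-(a / 2) * u ^ 2) := by
    rw [integral_pos_iff_support_of_nonneg hDnonneg hDint]
    have hsub : Set.Ioi (0 : ℝ) ⊆ Function.support
        (fun u : ℝ => (1 - c u) * Real.exp (-(a / 2) * u ^ 2)) := by
      intro u hu
      have hu0 : (0 : ℝ) < u := hu
      have hs2 : Real.sqrt (1 + (u / 2) ^ 2) ^ 2 = 1 + (u / 2) ^ 2 :=
        Real.sq_sqrt (by positivity)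
      have h1 : 1 < Real.sqrt (1 + (u / 2) ^ 2) := by
        nlinarith [Real.sqrt_nonneg (1 + (u / 2) ^ 2)]
      have : c u < 1 := by
        show (Real.sqrt (1 + (u / 2) ^ 2))⁻¹ < 1
        rw [inv_lt_one_iff₀]
        right
        exact h1
      have : 0 < (1 - c u) * Real.exp (-(a / 2) * u ^ 2) :=
        mul_pos (by linarith) (Real.exp_pos _)
      exact ne_of_gt this
    calc (0 : ENNReal) < volume (Set.Ioi (0 : ℝ)) := by simp
      _ ≤ _ := measure_mono hsub
  have hup : J < G := by
    have : (∫ u : ℝ, (1 - c u) * Real.exp (-(a / 2) * u ^ 2)) = G - J := by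
      rw [hJ, ← hgauss, ← integral_sub hgint hJint]
      congr 1; funext u; ring
    linarith [hDpos, this ▸ hDpos]
  -- assemble
  rw [hIeq, hGeq]
  have hexp : 0 < Real.exp (-a) := Real.exp_pos _
  constructor
  · have h18 : 1 / (8 * a) < 1 / 8 := by
      apply div_lt_div_of_pos_left one_pos (by norm_num) (by linarith)
    have h78 : (7 / 8 : ℝ) * G < J := by nlinarith
    calc (7 : ℝ) / 8 * Real.exp (-a) * G = Real.exp (-a) * (7 / 8 * G) := by ring
      _ < Real.exp (-a) * J := mul_lt_mul_of_pos_left h78 hexp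
  · exact mul_lt_mul_of_pos_left hup hexp
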